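/- Let a : ℕ → ℕ → ℝ be a double sequence with a k ℓ ≠ 0 for all k, ℓ. Suppose the ratios |a k (ℓ+1)| / |a k ℓ| tend to a limit L as (k,ℓ) → ∞ along the product filter atTop ×ˢ atTop, with L > 1 (L may be +∞). Then the double series of a diverges in Pringsheim's sense: there is no real number S such that the rectangular partial sums S_{m,n} = Σ_{k=0}^{m} Σ_{ℓ=0}^{n} a k ℓ tend to S as (m,n) → ∞ along the product filter atTop ×ˢ atTop. -/

import Mathlib

open Filter

/-- Ratio test: divergence in Pringsheim's sense when the ratio limit exceeds 1
(possibly `+∞`, hence the limit is taken in `EReal`). -/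
theorem double_series_ratio_test_divergent (a : ℕ → ℕ → ℝ)
    (hne : ∀ k ℓ : ℕ, a k ℓ ≠ 0)
    (L : EReal) (hL : 1 < L)
    (hlim : Tendsto (fun p : ℕ × ℕ => ((|a p.1 (p.2 + 1)| / |a p.1 p.2| : ℝ) : EReal))
      (atTop ×ˢ atTop) (nhds L)) :
    ¬ ∃ S : ℝ, Tendsto
      (fun p : ℕ × ℕ => ∑ k ∈ Finset.range (p.1 + 1), ∑ ℓ ∈ Finset.range (p.2 + 1), a k ℓ)
      (atTop ×ˢ atTop) (nhds S) := by
  rintro ⟨S, hS⟩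
  -- pick a real r with 1 < r < L
  obtain ⟨c, hc1, hcL⟩ := exists_between hL
  have hc_top : c ≠ ⊤ := (hcL.trans_le le_top).ne
  have hc_bot : c ≠ ⊥ := ne_bot_of_gt hc1
  set r : ℝ := c.toReal with hrdef
  have hrc : (r : EReal) = c := EReal.coe_toReal hc_top hc_bot
  have hr : 1 < r := by
    have : ((1 : ℝ) : EReal) < (r : EReal) := by rw [hrc]; exact_mod_cast hc1
    exact_mod_cast this
  -- eventually the ratio is ≥ r
  have E1 : ∀ᶠ p : ℕ × ℕ in atTop ×ˢ atTop,
      r ≤ |a p.1 (p.2 + 1)| / |a p.1 p.2| := by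
    have h := hlim.eventually_const_lt (by rw [hrc] at *; exact hcL :
      (r : EReal) < L)
    filter_upwards [h] with p hp
    exact le_of_lt (by exact_mod_cast hp)
  -- terms tend to 0
  have hT : Tendsto (fun p : ℕ × ℕ =>
      ∑ k ∈ Finset.range (p.1 + 1), ∑ ℓ ∈ Finset.range (p.2 + 1), a k ℓ)
      (atTop ×ˢ atTop) (nhds S) := hS
  have hshift : Tendsto (fun p : ℕ × ℕ => (p.1 + 1, p.2 + 1))
      (atTop ×ˢ atTop) (atTop ×ˢ atTop) :=
    (tendsto_add_atTop_nat 1).prodMap (tendsto_add_atTop_nat 1)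
  have hshift1 : Tendsto (fun p : ℕ × ℕ => (p.1, p.2 + 1))
      (atTop ×ˢ atTop) (atTop ×ˢ atTop) :=
    tendsto_id.prodMap (tendsto_add_atTop_nat 1)
  have hshift2 : Tendsto (fun p : ℕ × ℕ => (p.1 + 1, p.2))
      (atTop ×ˢ atTop) (atTop ×ˢ atTop) :=
    (tendsto_add_atTop_nat 1).prodMap tendsto_id
  have h0 : Tendsto (fun p : ℕ × ℕ => a (p.1 + 1) (p.2 + 1))
      (atTop ×ˢ atTop) (nhds 0) := by
    have hcomb := (((hT.comp hshift).sub (hT.comp hshift1)).sub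
      (hT.comp hshift2)).add hT
    have : S - S - S + S = 0 := by ring
    rw [this] at hcomb
    refine hcomb.congr fun p => ?_
    simp only [Function.comp_apply]
    simp [Finset.sum_range_succ]
    ring
  have E2 : ∀ᶠ p : ℕ × ℕ in atTop ×ˢ atTop, |a (p.1 + 1) (p.2 + 1)| < 1 := by
    have := h0.abs
    rw [abs_zero] at this
    exact this.eventually_lt_const one_pos
  have E := E1.and E2
  rw [prod_atTop_atTop_eq, eventually_atTop] at E
  obtain ⟨q, hq⟩ := E
  set k₀ := q.1 + 1 with hk₀
  set n₀ := q.2 + 1 with hn₀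
  have hrpos : (0 : ℝ) < r := lt_trans one_pos hr
  have hratio : ∀ ℓ, n₀ ≤ ℓ → r * |a k₀ ℓ| ≤ |a k₀ (ℓ + 1)| := by
    intro ℓ hℓ
    have h := (hq (k₀, ℓ) ⟨Nat.le_succ q.1, le_trans (Nat.le_succ q.2) hℓ⟩).1
    exact (le_div_iff₀ (abs_pos.mpr (hne _ _))).mp h
  have hsmall : ∀ j : ℕ, |a k₀ (n₀ + j)| < 1 := by
    intro j
    have h := (hq (q.1, q.2 + j) ⟨le_refl _, Nat.le_add_right _ _⟩).2
    have : q.2 + j + 1 = n₀ + j := by omega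
    rwa [this] at h
  have hgrow : ∀ j : ℕ, r ^ j * |a k₀ n₀| ≤ |a k₀ (n₀ + j)| := by
    intro j
    induction j with
    | zero => simp
    | succ j ih =>
      have h1 := hratio (n₀ + j) (Nat.le_add_right _ _)
      calc r ^ (j + 1) * |a k₀ n₀| = r * (r ^ j * |a k₀ n₀|) := by ring
        _ ≤ r * |a k₀ (n₀ + j)| := by
            exact mul_le_mul_of_nonneg_left ih (le_of_lt hrpos)
        _ ≤ |a k₀ (n₀ + j + 1)| := h1
        _ = |a k₀ (n₀ + (j + 1))| := by rw [Nat.add_assoc]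
  have hapos : 0 < |a k₀ n₀| := abs_pos.mpr (hne _ _)
  obtain ⟨j, hj⟩ := pow_unbounded_of_one_lt (1 / |a k₀ n₀|) hr
  have : 1 < r ^ j * |a k₀ n₀| := by
    rw [div_lt_iff₀ hapos] at hj
    linarith
  exact absurd (lt_of_lt_of_le this (hgrow j)) (not_lt_of_gt (hsmall j))
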